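/- Consider the two-pointer staircase search in an n × n real matrix M with strictly increasing rows and columns: starting at (lo, hi) = (0, n−1), repeatedly move to (lo+1, hi) if M(lo, hi) < x and to (lo, hi−1) if M(lo, hi) ≥ x, until lo = n or hi = −1 (treating the case M(lo,hi) = x as reporting x and then decrementing hi). Then the search visits a cell with value x if and only if x occurs somewhere in M. -/

import Mathlib

/-- Correctness of the two-pointer staircase search: the search trajectory
`p : ℕ → ℕ × ℤ` (pair `(lo, hi)`), started at `(0, n-1)`, moving down when
`M(lo,hi) < x` and left otherwise (in particular after reporting `M(lo,hi) = x`),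
visits a cell of value `x` iff `x` occurs in the matrix `M`, provided `M` has
strictly increasing rows and columns. -/
theorem staircase_search_finds_iff (n : ℕ) (hn : 0 < n)
    (M : Fin n → Fin n → ℝ)
    (hrow : ∀ i, StrictMono (M i)) (hcol : ∀ j, StrictMono (fun i => M i j))
    (x : ℝ) (p : ℕ → ℕ × ℤ)
    (h0 : p 0 = (0, (n : ℤ) - 1))
    (hstep : ∀ t, (h1 : (p t).1 < n) → 0 ≤ (p t).2 → (h3 : (p t).2.toNat < n) →
      p (t + 1) =
        if M ⟨(p t).1, h1⟩ ⟨(p t).2.toNat, h3⟩ < x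
        then ((p t).1 + 1, (p t).2)
        else ((p t).1, (p t).2 - 1)) :
    (∃ t, ∃ (h1 : (p t).1 < n) (h3 : (p t).2.toNat < n),
        0 ≤ (p t).2 ∧ M ⟨(p t).1, h1⟩ ⟨(p t).2.toNat, h3⟩ = x) ↔
      ∃ i j, M i j = x := by
  constructor
  · rintro ⟨t, h1, h3, _, hx⟩
    exact ⟨_, _, hx⟩
  · rintro ⟨i, j, hx⟩
    have key : ∀ k, ∀ t, (n - (p t).1) + ((p t).2 + 1).toNat ≤ k →
        (p t).1 ≤ (i : ℕ) → (j : ℤ) ≤ (p t).2 → (p t).2 < n →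
        ∃ t, ∃ (h1 : (p t).1 < n) (h3 : (p t).2.toNat < n),
          0 ≤ (p t).2 ∧ M ⟨(p t).1, h1⟩ ⟨(p t).2.toNat, h3⟩ = x := by
      intro k
      induction k with
      | zero =>
        intro t hk hle hj hlt
        have : (p t).1 < n := lt_of_le_of_lt hle i.isLt
        omega
      | succ k ih =>
        intro t hk hle hj hlt
        have h1 : (p t).1 < n := lt_of_le_of_lt hle i.isLt
        have hj0 : (0 : ℤ) ≤ (p t).2 := le_trans (by positivity) hj
        have h3 : (p t).2.toNat < n := by omega
        have hs := hstep t h1 hj0 h3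
        by_cases heq : M ⟨(p t).1, h1⟩ ⟨(p t).2.toNat, h3⟩ = x
        · exact ⟨t, h1, h3, hj0, heq⟩
        · by_cases hlt' : M ⟨(p t).1, h1⟩ ⟨(p t).2.toNat, h3⟩ < x
          · rw [if_pos hlt'] at hs
            -- witness row is strictly below lo
            have hine : (p t).1 ≠ (i : ℕ) := by
              intro h
              have hjle : j ≤ (⟨(p t).2.toNat, h3⟩ : Fin n) := by
                rw [Fin.le_def]; simp; omega
              have := (hrow i).monotone hjle
              rw [hx] at this
              have : M i ⟨(p t).2.toNat, h3⟩ < x := by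
                have := hlt'; rw [show (⟨(p t).1, h1⟩ : Fin n) = i from Fin.ext h] at this
                exact this
              linarith [((hrow i).monotone hjle).trans_lt this, hx ▸ (hrow i).monotone hjle]
            apply ih (t + 1) <;> rw [hs] <;> simp <;> omega
          · rw [if_neg hlt'] at hs
            push_neg at hlt'
            have hgt : x < M ⟨(p t).1, h1⟩ ⟨(p t).2.toNat, h3⟩ := lt_of_le_of_ne hlt' (Ne.symm heq)
            -- witness column is strictly left of hi
            have hjne : (j : ℕ) ≠ (p t).2.toNat := by
              intro h
              have hile : (⟨(p t).1, h1⟩ : Fin n) ≤ i := by rw [Fin.le_def]; exact hle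
              have hmono := (hcol j).monotone hile
              rw [hx] at hmono
              rw [show (⟨(p t).2.toNat, h3⟩ : Fin n) = j from Fin.ext h.symm] at hgt
              linarith
            have hjlt : (j : ℤ) < (p t).2 := by omega
            apply ih (t + 1) <;> rw [hs] <;> simp <;> omega
    apply key (n + n) 0 <;> rw [h0] <;> simp <;> omega
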